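/- Let w : ℝᴺ → ℝᴺ be continuous and let x, y ∈ ℝᴺ. For every ε > 0 there exists δ > 0 such that for every continuous vector field u : ℝᴺ → ℝᴺ satisfying ‖u(z) − w(z)‖ ≤ δ for all z ∈ ℝᴺ, and for all points a, b ∈ ℝᴺ with ‖a − x‖ ≤ δ and ‖b − y‖ ≤ δ, one has Q_u(a, b) ≤ Q_w(x, y) + ε. (Joint upper semicontinuity of the Freidlin–Wentzell quasipotential in the vector field, with respect to the uniform distance, and in the endpoints.) -/

import Mathlib

open MeasureTheory Set

/-- A path `φ : [T₁,T₂] → ℝᴺ` is admissible with derivative `g` if `g` is measurable with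
square-integrable norm on `[T₁,T₂]` and `φ(t) = φ(T₁) + ∫_{T₁}^t g(s) ds` on `[T₁,T₂]`. -/
def IsAdmissiblePath (N : ℕ) (T₁ T₂ : ℝ)
    (φ g : ℝ → EuclideanSpace ℝ (Fin N)) : Prop :=
  Measurable g ∧
  MeasureTheory.IntegrableOn (fun t => ‖g t‖ ^ 2) (Set.Icc T₁ T₂) ∧
  ∀ t ∈ Set.Icc T₁ T₂, φ t = φ T₁ + ∫ s in T₁..t, g s

/-- The Freidlin–Wentzell quasipotential of a vector field `u` between `x` and `y`: the
infimum of the actions `(1/4)∫₀^T ‖g − u(φ)‖²` over all `T > 0` and all admissible paths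
`φ : [0,T] → ℝᴺ` from `x` to `y`. -/
noncomputable def quasipotential (N : ℕ)
    (u : EuclideanSpace ℝ (Fin N) → EuclideanSpace ℝ (Fin N))
    (x y : EuclideanSpace ℝ (Fin N)) : ℝ :=
  sInf {a : ℝ | ∃ T : ℝ, 0 < T ∧ ∃ φ g : ℝ → EuclideanSpace ℝ (Fin N),
    IsAdmissiblePath N 0 T φ g ∧ φ 0 = x ∧ φ T = y ∧
    a = (1 / 4) * ∫ t in Set.Icc 0 T, ‖g t - u (φ t)‖ ^ 2}


variable {N : ℕ}

-- L2 implies L1 on Icc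
lemma integrableOn_of_sq {g : ℝ → EuclideanSpace ℝ (Fin N)} {T : ℝ}
    (hgm : Measurable g)
    (h2 : IntegrableOn (fun t => ‖g t‖ ^ 2) (Icc 0 T)) :
    IntegrableOn g (Icc 0 T) := by
  refine Integrable.mono' ((integrable_const (1:ℝ)).add h2) hgm.aestronglyMeasurable ?_
  filter_upwards with t
  have h := norm_nonneg (g t)
  simp only [Pi.add_apply]
  nlinarith [sq_nonneg (‖g t‖ - 1)]

lemma quasiSet_nonempty (u : EuclideanSpace ℝ (Fin N) → EuclideanSpace ℝ (Fin N))
    (x y : EuclideanSpace ℝ (Fin N)) :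
    {a : ℝ | ∃ T : ℝ, 0 < T ∧ ∃ φ g : ℝ → EuclideanSpace ℝ (Fin N),
      IsAdmissiblePath N 0 T φ g ∧ φ 0 = x ∧ φ T = y ∧
      a = (1 / 4) * ∫ t in Set.Icc 0 T, ‖g t - u (φ t)‖ ^ 2}.Nonempty := by
  refine ⟨_, 1, one_pos, fun t => x + t • (y - x), fun _ => y - x, ⟨measurable_const, ?_, ?_⟩,
    by simp, by simp, rfl⟩
  · exact integrableOn_const measure_Icc_lt_top.ne
  · intro t _
    simp [intervalIntegral.integral_const, smul_sub]

lemma quasiSet_mem_nonneg {u : EuclideanSpace ℝ (Fin N) → EuclideanSpace ℝ (Fin N)}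
    {x y : EuclideanSpace ℝ (Fin N)} {A : ℝ}
    (hA : A ∈ {a : ℝ | ∃ T : ℝ, 0 < T ∧ ∃ φ g : ℝ → EuclideanSpace ℝ (Fin N),
      IsAdmissiblePath N 0 T φ g ∧ φ 0 = x ∧ φ T = y ∧
      a = (1 / 4) * ∫ t in Set.Icc 0 T, ‖g t - u (φ t)‖ ^ 2}) : 0 ≤ A := by
  obtain ⟨T, hT, φ, g, _, _, _, rfl⟩ := hA
  have : 0 ≤ ∫ t in Set.Icc 0 T, ‖g t - u (φ t)‖ ^ 2 :=
    setIntegral_nonneg measurableSet_Icc fun t _ => sq_nonneg _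
  linarith

lemma integrableOn_norm_sq_sub {E : Type*} [NormedAddCommGroup E] {f h : ℝ → E} {s : Set ℝ}
    (hfm : AEStronglyMeasurable f (volume.restrict s))
    (hf : IntegrableOn (fun t => ‖f t‖ ^ 2) s)
    (hhm : AEStronglyMeasurable h (volume.restrict s))
    (hh : IntegrableOn (fun t => ‖h t‖ ^ 2) s) :
    IntegrableOn (fun t => ‖f t - h t‖ ^ 2) s := by
  refine Integrable.mono' ((hf.const_mul 2).add (hh.const_mul 2))
    ((hfm.sub hhm).norm.pow 2) ?_
  filter_upwards with t
  simp only [Pi.add_apply]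
  rw [Real.norm_eq_abs, abs_of_nonneg (by positivity)]
  have h1 : ‖f t - h t‖ ≤ ‖f t‖ + ‖h t‖ := norm_sub_le _ _
  nlinarith [norm_nonneg (f t - h t), norm_nonneg (f t), norm_nonneg (h t),
    sq_nonneg (‖f t‖ - ‖h t‖)]

set_option maxHeartbeats 1000000 in
/-- Joint upper semicontinuity of the Freidlin–Wentzell quasipotential in
the vector field (uniform distance) and in the endpoints. -/
theorem quasipotential_upper_semicontinuous (N : ℕ) (hN : 1 ≤ N)
    (w : EuclideanSpace ℝ (Fin N) → EuclideanSpace ℝ (Fin N)) (hw : Continuous w)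
    (x y : EuclideanSpace ℝ (Fin N)) :
    ∀ ε > 0, ∃ δ > 0,
      ∀ u : EuclideanSpace ℝ (Fin N) → EuclideanSpace ℝ (Fin N), Continuous u →
        (∀ z, ‖u z - w z‖ ≤ δ) →
        ∀ a b : EuclideanSpace ℝ (Fin N), ‖a - x‖ ≤ δ → ‖b - y‖ ≤ δ →
          quasipotential N u a b ≤ quasipotential N w x y + ε := by
  intro ε hε
  -- pick a near-optimal path for w
  obtain ⟨A, hAmem, hAlt⟩ :=
    Real.lt_sInf_add_pos (quasiSet_nonempty w x y) (half_pos hε)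
  obtain ⟨T, hT, φ, g, ⟨hgm, hgsq, hFTC⟩, hφ0, hφT, hA⟩ := hAmem
  have hgi : IntegrableOn g (Icc 0 T) := integrableOn_of_sq hgm hgsq
  have hgii : ∀ t ∈ Icc (0:ℝ) T, IntervalIntegrable g volume 0 t := by
    intro t ht
    rw [intervalIntegrable_iff_integrableOn_Ioc_of_le ht.1]
    exact hgi.mono_set fun s hs => ⟨hs.1.le, hs.2.trans ht.2⟩
  set ψ : ℝ → EuclideanSpace ℝ (Fin N) := fun t => x + ∫ s in (0:ℝ)..t, g s with hψdef
  have hψc : ContinuousOn ψ (Icc 0 T) := by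
    refine continuousOn_const.add ?_
    exact (intervalIntegral.continuousOn_primitive hgi).congr
      fun t ht => intervalIntegral.integral_of_le ht.1
  have hφψ : ∀ t ∈ Icc (0:ℝ) T, φ t = ψ t := by
    intro t ht
    rw [hFTC t ht, hφ0]
  have hT0T : (0:ℝ) ∈ Icc (0:ℝ) T := ⟨le_refl 0, hT.le⟩
  have hTT : T ∈ Icc (0:ℝ) T := ⟨hT.le, le_refl T⟩
  have hψT : ψ T = y := by rw [← hφψ T hTT, hφT]
  set K : Set (EuclideanSpace ℝ (Fin N)) := ψ '' Icc 0 T with hK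
  have hKc : IsCompact K := isCompact_Icc.image_of_continuousOn hψc
  set K' : Set (EuclideanSpace ℝ (Fin N)) := Metric.cthickening 1 K with hK'
  have hucw : UniformContinuousOn w K' :=
    hKc.cthickening.uniformContinuousOn_of_continuous hw.continuousOn
  -- constants
  set I : ℝ := ∫ t in Icc (0:ℝ) T, ‖g t - w (ψ t)‖ ^ 2 with hIdef
  have hI0 : 0 ≤ I := setIntegral_nonneg measurableSet_Icc fun t _ => sq_nonneg _
  have hAI : A = (1/4) * I := by
    rw [hA]; congr 1
    exact setIntegral_congr_fun measurableSet_Icc fun t ht => by rw [hφψ t ht]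
  set θ : ℝ := ε / (I + 1) with hθdef
  have hθ : 0 < θ := div_pos hε (by linarith)
  have hθI : θ * I ≤ ε := by
    have h1 : θ * (I + 1) = ε := by rw [hθdef]; exact div_mul_cancel₀ ε (ne_of_gt (by linarith))
    nlinarith
  set η : ℝ := Real.sqrt (ε / ((1 + 1/θ) * T + 1)) with hηdef
  have hDpos : 0 < (1 + 1/θ) * T + 1 := by positivity
  have hηpos : 0 < η := Real.sqrt_pos.2 (div_pos hε hDpos)
  have hηsq : (1 + 1/θ) * η ^ 2 * T ≤ ε := by
    have h1 : η ^ 2 = ε / ((1 + 1/θ) * T + 1) :=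
      Real.sq_sqrt (le_of_lt (div_pos hε hDpos))
    have h2 : (1 + 1/θ) * (ε / ((1 + 1/θ) * T + 1)) * T
        = ε * ((1 + 1/θ) * T) / ((1 + 1/θ) * T + 1) := by ring
    rw [h1, h2, div_le_iff₀ hDpos]
    have h3 : 0 ≤ (1 + 1/θ) * T := by positivity
    nlinarith
  obtain ⟨δ₀, hδ₀, hw3⟩ := (Metric.uniformContinuousOn_iff.1 hucw) (η/3) (by positivity)
  set δ : ℝ := min (min (δ₀/3) (1/2)) (min (η/3) (η*T/6)) with hδdef
  have hδpos : 0 < δ := by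
    apply lt_min (lt_min (by positivity) (by norm_num)) (lt_min (by positivity) (by positivity))
  have hδ1 : δ ≤ δ₀/3 := le_trans (min_le_left _ _) (min_le_left _ _)
  have hδ2 : δ ≤ 1/2 := le_trans (min_le_left _ _) (min_le_right _ _)
  have hδ3 : δ ≤ η/3 := le_trans (min_le_right _ _) (min_le_left _ _)
  have hδ4 : δ ≤ η*T/6 := le_trans (min_le_right _ _) (min_le_right _ _)
  refine ⟨δ, hδpos, ?_⟩
  intro u hu hud a b hax hby
  -- perturbed path
  set c : EuclideanSpace ℝ (Fin N) := T⁻¹ • ((b - y) - (a - x)) with hcdef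
  set φ' : ℝ → EuclideanSpace ℝ (Fin N) :=
    fun t => ψ t + (1 - t/T) • (a - x) + (t/T) • (b - y) with hφ'def
  set g' : ℝ → EuclideanSpace ℝ (Fin N) := fun t => g t + c with hg'def
  have hg'm : Measurable g' := hgm.add_const c
  have hc : ‖c‖ ≤ η / 3 := by
    have h1 : ‖(b - y) - (a - x)‖ ≤ 2 * δ := by
      calc ‖(b - y) - (a - x)‖ ≤ ‖b - y‖ + ‖a - x‖ := norm_sub_le _ _
        _ ≤ 2 * δ := by linarith
    have h2 : ‖c‖ = ‖(b - y) - (a - x)‖ / T := by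
      rw [hcdef, norm_smul, norm_inv, Real.norm_eq_abs, abs_of_pos hT, div_eq_inv_mul]
    rw [h2]
    rw [div_le_iff₀ hT]
    calc ‖(b - y) - (a - x)‖ ≤ 2 * δ := h1
      _ ≤ η / 3 * T := by nlinarith
  -- FTC for the perturbed path
  have hFTC' : ∀ t ∈ Icc (0:ℝ) T, φ' t = φ' 0 + ∫ s in (0:ℝ)..t, g' s := by
    intro t ht
    have h1 : ∫ s in (0:ℝ)..t, g' s = (∫ s in (0:ℝ)..t, g s) + t • c := by
      rw [hg'def]
      rw [intervalIntegral.integral_add (hgii t ht) intervalIntegrable_const,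
        intervalIntegral.integral_const]
      simp
    have htc : t • c = (t/T) • ((b - y) - (a - x)) := by
      rw [hcdef, smul_smul, div_eq_mul_inv]
    rw [h1, htc]
    simp only [hφ'def, hψdef]
    rw [show ((0:ℝ)/T) = 0 by ring]
    simp only [intervalIntegral.integral_same]
    module
  have hadm' : IsAdmissiblePath N 0 T φ' g' := by
    refine ⟨hg'm, ?_, hFTC'⟩
    have heq : (fun t => ‖g' t‖ ^ 2) = fun t => ‖g t - (-c)‖ ^ 2 := by
      funext t; rw [sub_neg_eq_add]
    rw [heq]
    exact integrableOn_norm_sq_sub hgm.aestronglyMeasurable hgsq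
      aestronglyMeasurable_const (integrableOn_const measure_Icc_lt_top.ne)
  have hφ'0 : φ' 0 = a := by
    simp only [hφ'def, hψdef]
    rw [show ((0:ℝ)/T) = 0 by ring]
    simp only [intervalIntegral.integral_same, sub_zero, zero_smul, add_zero, one_smul]
    abel
  have hφ'T : φ' T = b := by
    simp only [hφ'def]
    rw [div_self hT.ne', hψT]
    simp only [sub_self, zero_smul, add_zero, one_smul, zero_add]
    abel
  -- continuity facts on Icc
  have hφ'c : ContinuousOn φ' (Icc 0 T) := by
    refine (hψc.add ?_).add ?_
    · exact (continuousOn_const.sub ((continuousOn_id.div_const T))).smul continuousOn_const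
    · exact (continuousOn_id.div_const T).smul continuousOn_const
  -- pointwise estimate
  have hpt : ∀ t ∈ Icc (0:ℝ) T,
      ‖g' t - u (φ' t)‖ ^ 2 ≤ (1 + θ) * ‖g t - w (ψ t)‖ ^ 2 + (1 + 1/θ) * η ^ 2 := by
    intro t ht
    have h1 : 0 ≤ t / T := div_nonneg ht.1 hT.le
    have h2 : t / T ≤ 1 := (div_le_one hT).2 ht.2
    have hnear : ‖φ' t - ψ t‖ ≤ 2 * δ := by
      have : φ' t - ψ t = (1 - t/T) • (a - x) + (t/T) • (b - y) := by
        simp only [hφ'def]; abel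
      rw [this]
      calc ‖(1 - t/T) • (a - x) + (t/T) • (b - y)‖
          ≤ ‖(1 - t/T) • (a - x)‖ + ‖(t/T) • (b - y)‖ := norm_add_le _ _
        _ = |1 - t/T| * ‖a - x‖ + |t/T| * ‖b - y‖ := by
            rw [norm_smul, norm_smul, Real.norm_eq_abs, Real.norm_eq_abs]
        _ ≤ 1 * δ + 1 * δ := by
            apply add_le_add
            · exact mul_le_mul (by rw [abs_of_nonneg (by linarith)]; linarith) hax
                (norm_nonneg _) one_pos.le
            · exact mul_le_mul (by rw [abs_of_nonneg h1]; linarith) hby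
                (norm_nonneg _) one_pos.le
        _ = 2 * δ := by ring
    have hψK : ψ t ∈ K := mem_image_of_mem ψ ht
    have hψK' : ψ t ∈ K' := Metric.self_subset_cthickening K hψK
    have hφ'K' : φ' t ∈ K' := by
      refine Metric.mem_cthickening_of_dist_le (φ' t) (ψ t) 1 K hψK ?_
      rw [dist_eq_norm]
      linarith
    have hwdiff : ‖w (ψ t) - w (φ' t)‖ ≤ η / 3 := by
      have hd : dist (w (ψ t)) (w (φ' t)) < η / 3 := by
        refine hw3 _ hψK' _ hφ'K' ?_
        rw [dist_eq_norm, ← neg_sub, norm_neg]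
        calc ‖φ' t - ψ t‖ ≤ 2 * δ := hnear
          _ < δ₀ := by linarith
      rw [← dist_eq_norm]
      exact hd.le
    have hub : ‖u (φ' t) - w (φ' t)‖ ≤ η / 3 := (hud _).trans (by linarith)
    have hsplit : g' t - u (φ' t) =
        (g t - w (ψ t)) + c + (w (ψ t) - w (φ' t)) + (w (φ' t) - u (φ' t)) := by
      simp only [hg'def]; abel
    have hnorm : ‖g' t - u (φ' t)‖ ≤ ‖g t - w (ψ t)‖ + η := by
      rw [hsplit]
      have h4 := norm_add_le ((g t - w (ψ t)) + c + (w (ψ t) - w (φ' t))) (w (φ' t) - u (φ' t))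
      have h5 := norm_add_le ((g t - w (ψ t)) + c) (w (ψ t) - w (φ' t))
      have h6 := norm_add_le (g t - w (ψ t)) c
      have hub' : ‖w (φ' t) - u (φ' t)‖ ≤ η / 3 := by rw [norm_sub_rev]; exact hub
      linarith
    set r : ℝ := ‖g t - w (ψ t)‖ with hrdef
    have hr0 : 0 ≤ r := norm_nonneg _
    have hsq : ‖g' t - u (φ' t)‖ ^ 2 ≤ (r + η) ^ 2 :=
      pow_le_pow_left₀ (norm_nonneg _) hnorm 2
    refine hsq.trans ?_
    have hinv : θ * (1/θ) = 1 := by field_simp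
    nlinarith [sq_nonneg (θ * r - η), hθ, mul_pos hθ hθ, sq_nonneg r, sq_nonneg η]
  -- integrability of both sides
  have hwψi : IntegrableOn (fun t => ‖g t - w (ψ t)‖ ^ 2) (Icc 0 T) := by
    have hwb : IntegrableOn (fun t => ‖w (ψ t)‖ ^ 2) (Icc 0 T) :=
      (((hw.comp_continuousOn hψc).norm.pow 2).integrableOn_compact isCompact_Icc)
    exact integrableOn_norm_sq_sub hgm.aestronglyMeasurable hgsq
      ((hw.comp_continuousOn hψc).aestronglyMeasurable measurableSet_Icc) hwb
  have hg'sq : IntegrableOn (fun t => ‖g' t‖ ^ 2) (Icc 0 T) := hadm'.2.1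
  have huφ'i : IntegrableOn (fun t => ‖g' t - u (φ' t)‖ ^ 2) (Icc 0 T) := by
    have hub2 : IntegrableOn (fun t => ‖u (φ' t)‖ ^ 2) (Icc 0 T) :=
      (((hu.comp_continuousOn hφ'c).norm.pow 2).integrableOn_compact isCompact_Icc)
    exact integrableOn_norm_sq_sub hg'm.aestronglyMeasurable hg'sq
      ((hu.comp_continuousOn hφ'c).aestronglyMeasurable measurableSet_Icc) hub2
  -- integral estimate
  have hint : (∫ t in Icc (0:ℝ) T, ‖g' t - u (φ' t)‖ ^ 2) ≤ (1 + θ) * I + (1 + 1/θ) * η ^ 2 * T := by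
    have hi1 : IntegrableOn (fun t => (1 + θ) * ‖g t - w (ψ t)‖ ^ 2) (Icc 0 T) :=
      hwψi.const_mul _
    have hi2 : IntegrableOn (fun _ : ℝ => (1 + 1/θ) * η ^ 2) (Icc 0 T) :=
      integrableOn_const measure_Icc_lt_top.ne
    have h1 : (∫ t in Icc (0:ℝ) T, ‖g' t - u (φ' t)‖ ^ 2) ≤
        ∫ t in Icc (0:ℝ) T, ((1 + θ) * ‖g t - w (ψ t)‖ ^ 2 + (1 + 1/θ) * η ^ 2) :=
      setIntegral_mono_on huφ'i (hi1.add hi2) measurableSet_Icc hpt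
    refine h1.trans ?_
    rw [integral_add hi1 hi2]
    rw [integral_const_mul, setIntegral_const]
    simp only [smul_eq_mul]
    rw [Real.volume_real_Icc_of_le hT.le, sub_zero]
    rw [hIdef]
    apply le_of_eq
    ring
  -- conclude
  have hmem : (1/4) * (∫ t in Icc (0:ℝ) T, ‖g' t - u (φ' t)‖ ^ 2) ∈
      {A' : ℝ | ∃ T : ℝ, 0 < T ∧ ∃ φ g : ℝ → EuclideanSpace ℝ (Fin N),
        IsAdmissiblePath N 0 T φ g ∧ φ 0 = a ∧ φ T = b ∧
        A' = (1 / 4) * ∫ t in Set.Icc 0 T, ‖g t - u (φ t)‖ ^ 2} :=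
    ⟨T, hT, φ', g', hadm', hφ'0, hφ'T, rfl⟩
  have hle : quasipotential N u a b ≤
      (1/4) * (∫ t in Icc (0:ℝ) T, ‖g' t - u (φ' t)‖ ^ 2) := by
    unfold quasipotential
    exact csInf_le ⟨0, fun A' hA' => quasiSet_mem_nonneg hA'⟩ hmem
  have hQ : A < quasipotential N w x y + ε/2 := by
    unfold quasipotential
    exact hAlt
  have hfinal : (1/4) * (∫ t in Icc (0:ℝ) T, ‖g' t - u (φ' t)‖ ^ 2) ≤ A + ε/2 := by
    have h1 : (1/4) * (∫ t in Icc (0:ℝ) T, ‖g' t - u (φ' t)‖ ^ 2) ≤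
        (1/4) * ((1 + θ) * I + (1 + 1/θ) * η ^ 2 * T) := by linarith
    have h2 : (1/4) * ((1 + θ) * I + (1 + 1/θ) * η ^ 2 * T) =
        (1/4) * I + (1/4) * (θ * I + (1 + 1/θ) * η ^ 2 * T) := by ring
    rw [hAI]
    linarith
  linarith
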